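/- (Projection error estimate, Eqn. (2.4)) Let x ∈ V = V_1⋯V_N have coefficient tensor X, and for each i = 1,…,N let V̂_i ⊆ V_i be the d̂_i-dimensional POD subspace of Theorem 2.3, i.e., the span of the functions V_{i,d̂_i}ᵀ L_i^{−1} Ψ_i built from the d̂_i leading left singular vectors of Z_i := L_i^T (pt^{i−1} X)^{(1)} (L_{i−1} ⊗ ⋯ ⊗ L_1 ⊗ L_N ⊗ ⋯ ⊗ L_{i+1}). Let x̂ be the ‖·‖_V-orthogonal projection of x onto V̂_1 · V̂_2 ⋯ V̂_N. Then ‖x − x̂‖_V² ≤ Σ_{i=1}^{N} Σ_{k=d̂_i+1}^{d_i} (σ_k^{(i)})², where σ_1^{(i)} ≥ σ_2^{(i)} ≥ ⋯ ≥ σ_{d_i}^{(i)} are the singular values of Z_i. -/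

import Mathlib

open MeasureTheory Matrix

/-- Insert the value `k₁` at position `i` of the partial multi-index `krest`,
producing a full multi-index; this realizes the index bookkeeping of the
cyclic permutation `pt^{i-1}` followed by mode-1 matricization. -/
def combineIdx {N : ℕ} {d : Fin N → ℕ} (i : Fin N) (k₁ : Fin (d i))
    (krest : ∀ j : {j : Fin N // j ≠ i}, Fin (d j.1)) : ∀ j, Fin (d j) :=
  fun j =>
    if h : j = i then (cast (congrArg (fun t => Fin (d t)) h).symm k₁)
    else krest ⟨j, h⟩

section TensorAux

variable {N : ℕ} {d : Fin N → ℕ}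

lemma combineIdx_same (i : Fin N) (a : Fin (d i))
    (kr : ∀ j : {j : Fin N // j ≠ i}, Fin (d j.1)) : combineIdx i a kr i = a := by
  simp [combineIdx]

lemma combineIdx_ne (i : Fin N) {j : Fin N} (h : j ≠ i) (a : Fin (d i))
    (kr : ∀ j : {j : Fin N // j ≠ i}, Fin (d j.1)) :
    combineIdx i a kr j = kr ⟨j, h⟩ := by
  simp [combineIdx, h]

/-- the index-splitting equivalence -/
def idxEquiv (d : Fin N → ℕ) (i : Fin N) :
    (Fin (d i) × ∀ j : {j : Fin N // j ≠ i}, Fin (d j.1)) ≃ (∀ j, Fin (d j)) where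
  toFun p := combineIdx i p.1 p.2
  invFun k := (k i, fun j => k j.1)
  left_inv p := by
    refine Prod.ext ?_ ?_
    · simp [combineIdx_same]
    · funext j
      simp [combineIdx_ne i j.2]
  right_inv k := by
    funext j
    by_cases h : j = i
    · subst h; simp [combineIdx_same]
    · simp [combineIdx_ne i h]

/-- apply a Kronecker-product matrix to a tensor -/
def tApp (A : ∀ i, Matrix (Fin (d i)) (Fin (d i)) ℝ)
    (C : (∀ i, Fin (d i)) → ℝ) : (∀ i, Fin (d i)) → ℝ :=
  fun k => ∑ m, (∏ i, A i (k i) (m i)) * C m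

/-- euclidean inner product of coefficient tensors -/
def tIP (C D : (∀ i, Fin (d i)) → ℝ) : ℝ := ∑ k, C k * D k

lemma tIP_comm (C D : (∀ i, Fin (d i)) → ℝ) : tIP C D = tIP D C := by
  simp [tIP, mul_comm]

lemma tIP_self_nonneg (C : (∀ i, Fin (d i)) → ℝ) : 0 ≤ tIP C C :=
  Finset.sum_nonneg fun k _ => mul_self_nonneg _

lemma tIP_sub_left (C D E : (∀ i, Fin (d i)) → ℝ) :
    tIP (C - D) E = tIP C E - tIP D E := by
  simp [tIP, sub_mul, Finset.sum_sub_distrib]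

lemma tIP_sub_right (C D E : (∀ i, Fin (d i)) → ℝ) :
    tIP C (D - E) = tIP C D - tIP C E := by
  simp [tIP, mul_sub, Finset.sum_sub_distrib]

lemma tIP_add_right (C D E : (∀ i, Fin (d i)) → ℝ) :
    tIP C (D + E) = tIP C D + tIP C E := by
  simp [tIP, mul_add, Finset.sum_add_distrib]

lemma prod_ite_eq_ite {ι : Type*} [Fintype ι] [DecidableEq ι] {κ : ι → Type*}
    [∀ i, DecidableEq (κ i)] (a b : ∀ i, κ i) :
    (∏ i, if a i = b i then (1 : ℝ) else 0) = if a = b then 1 else 0 := by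
  by_cases h : a = b
  · subst h; simp
  · rw [if_neg h]
    obtain ⟨i, hi⟩ := Function.ne_iff.mp h
    exact Finset.prod_eq_zero (Finset.mem_univ i) (if_neg hi)

lemma prod_one_apply (k m : ∀ i, Fin (d i)) :
    (∏ i, (1 : Matrix (Fin (d i)) (Fin (d i)) ℝ) (k i) (m i))
      = if k = m then 1 else 0 := by
  simp only [Matrix.one_apply]
  exact prod_ite_eq_ite k m

lemma tApp_one (C : (∀ i, Fin (d i)) → ℝ) : tApp (fun _ => 1) C = C := by
  funext k
  simp [tApp, prod_one_apply, ite_mul]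

set_option maxHeartbeats 2000000 in
lemma tApp_tApp (A B : ∀ i, Matrix (Fin (d i)) (Fin (d i)) ℝ)
    (C : (∀ i, Fin (d i)) → ℝ) :
    tApp A (tApp B C) = tApp (fun i => A i * B i) C := by
  funext k
  simp only [tApp]
  calc ∑ m : ∀ i, Fin (d i), (∏ i, A i (k i) (m i)) *
          ∑ p : ∀ i, Fin (d i), (∏ i, B i (m i) (p i)) * C p
      = ∑ m : ∀ i, Fin (d i), ∑ p : ∀ i, Fin (d i),
          ((∏ i, A i (k i) (m i)) * (∏ i, B i (m i) (p i))) * C p := by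
        refine Finset.sum_congr rfl fun m _ => ?_
        rw [Finset.mul_sum]
        exact Finset.sum_congr rfl fun p _ => (mul_assoc _ _ _).symm
    _ = ∑ p : ∀ i, Fin (d i), (∑ m : ∀ i, Fin (d i),
          ∏ i, A i (k i) (m i) * B i (m i) (p i)) * C p := by
        rw [Finset.sum_comm]
        refine Finset.sum_congr rfl fun p _ => ?_
        rw [Finset.sum_mul]
        refine Finset.sum_congr rfl fun m _ => ?_
        rw [Finset.prod_mul_distrib]
    _ = ∑ p : ∀ i, Fin (d i), (∏ i, (A i * B i) (k i) (p i)) * C p := by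
        refine Finset.sum_congr rfl fun p _ => ?_
        congr 1
        rw [← Fintype.prod_sum (fun i j => A i (k i) j * B i j (p i))]
        exact Finset.prod_congr rfl fun i _ => (Matrix.mul_apply).symm

lemma tIP_tApp (A : ∀ i, Matrix (Fin (d i)) (Fin (d i)) ℝ)
    (C D : (∀ i, Fin (d i)) → ℝ) :
    tIP (tApp A C) D = tIP C (tApp (fun i => (A i)ᵀ) D) := by
  simp only [tIP, tApp, Finset.sum_mul, Finset.mul_sum]
  rw [Finset.sum_comm]
  refine Finset.sum_congr rfl fun m _ => Finset.sum_congr rfl fun k _ => ?_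
  simp only [Matrix.transpose_apply]
  ring

lemma tApp_sub (A : ∀ i, Matrix (Fin (d i)) (Fin (d i)) ℝ)
    (C D : (∀ i, Fin (d i)) → ℝ) :
    tApp A (C - D) = tApp A C - tApp A D := by
  funext k
  simp [tApp, mul_sub, Finset.sum_sub_distrib]

end TensorAux

section TensorAux2

variable {N : ℕ} {d : Fin N → ℕ}

lemma tIP_add_left (C D E : (∀ i, Fin (d i)) → ℝ) :
    tIP (C + D) E = tIP C E + tIP D E := by
  simp [tIP, add_mul, Finset.sum_add_distrib]

/-- if `Q = tApp A` with `A` symmetric idempotent entries, then `tIP u (Q u) = tIP (Q u) (Q u)` -/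
lemma tIP_tApp_self (A : ∀ i, Matrix (Fin (d i)) (Fin (d i)) ℝ)
    (hsym : ∀ i, (A i)ᵀ = A i) (hidem : ∀ i, A i * A i = A i)
    (u : (∀ i, Fin (d i)) → ℝ) :
    tIP (tApp A u) (tApp A u) = tIP u (tApp A u) := by
  rw [tIP_tApp, tApp_tApp]
  have : (fun i => (A i)ᵀ * A i) = A := funext fun i => by rw [hsym, hidem]
  rw [this]

lemma tApp_contraction (A : ∀ i, Matrix (Fin (d i)) (Fin (d i)) ℝ)
    (hsym : ∀ i, (A i)ᵀ = A i) (hidem : ∀ i, A i * A i = A i)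
    (u : (∀ i, Fin (d i)) → ℝ) :
    tIP (tApp A u) (tApp A u) ≤ tIP u u := by
  have h1 := tIP_tApp_self A hsym hidem u
  have h2 : tIP (u - tApp A u) (u - tApp A u)
      = tIP u u - tIP u (tApp A u) := by
    rw [tIP_sub_left, tIP_sub_right, tIP_sub_right, h1,
      tIP_comm (tApp A u) u]
    ring
  have h3 := tIP_self_nonneg (u - tApp A u)
  linarith [h1, h2, h3]

/-- Pythagoras-type bound -/
lemma tIP_le_of_orth (v w : (∀ i, Fin (d i)) → ℝ) (h : tIP v w = 0) :
    tIP v v ≤ tIP (v + w) (v + w) := by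
  have hexp : tIP (v + w) (v + w) = tIP v v + tIP v w + (tIP w v + tIP w w) := by
    rw [tIP_add_left, tIP_add_right, tIP_add_right]
  rw [hexp, h, tIP_comm w v, h]
  have := tIP_self_nonneg w
  linarith

/-- fiber formula for a single-mode application -/
lemma tApp_update_apply (i : Fin N) (A : Matrix (Fin (d i)) (Fin (d i)) ℝ)
    (C : (∀ i, Fin (d i)) → ℝ) (a : Fin (d i))
    (kr : ∀ j : {j : Fin N // j ≠ i}, Fin (d j.1)) :
    tApp (Function.update (fun j => (1 : Matrix (Fin (d j)) (Fin (d j)) ℝ)) i A) C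
        (combineIdx i a kr)
      = ∑ b, A a b * C (combineIdx i b kr) := by
  rw [tApp, ← Equiv.sum_comp (idxEquiv d i)]
  rw [Fintype.sum_prod_type]
  refine Finset.sum_congr rfl fun b _ => ?_
  have key : ∀ mr : ∀ j : {j : Fin N // j ≠ i}, Fin (d j.1),
      (∏ j, Function.update (fun j => (1 : Matrix (Fin (d j)) (Fin (d j)) ℝ)) i A j
        ((combineIdx i a kr) j) ((idxEquiv d i (b, mr)) j))
      = if kr = mr then A a b else 0 := by
    intro mr
    have hsplit := Fintype.prod_eq_mul_prod_compl i
      (fun j => Function.update (fun j => (1 : Matrix (Fin (d j)) (Fin (d j)) ℝ)) i A j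
        ((combineIdx i a kr) j) ((idxEquiv d i (b, mr)) j))
    rw [hsplit]
    have h1 : Function.update (fun j => (1 : Matrix (Fin (d j)) (Fin (d j)) ℝ)) i A i
        ((combineIdx i a kr) i) ((idxEquiv d i (b, mr)) i) = A a b := by
      rw [Function.update_self]
      show A (combineIdx i a kr i) (combineIdx i b mr i) = A a b
      rw [combineIdx_same, combineIdx_same]
    have h2 : (∏ j : {j : Fin N // j ≠ i},
        Function.update (fun j => (1 : Matrix (Fin (d j)) (Fin (d j)) ℝ)) i A j.1
          ((combineIdx i a kr) j.1) ((idxEquiv d i (b, mr)) j.1))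
        = if kr = mr then 1 else 0 := by
      have : ∀ j : {j : Fin N // j ≠ i},
          Function.update (fun j => (1 : Matrix (Fin (d j)) (Fin (d j)) ℝ)) i A j.1
            ((combineIdx i a kr) j.1) ((idxEquiv d i (b, mr)) j.1)
          = if kr j = mr j then 1 else 0 := by
        intro j
        rw [Function.update_of_ne j.2]
        show (1 : Matrix (Fin (d j.1)) (Fin (d j.1)) ℝ)
          (combineIdx i a kr j.1) (combineIdx i b mr j.1) = _
        rw [combineIdx_ne i j.2, combineIdx_ne i j.2, Matrix.one_apply]
      rw [Finset.prod_congr rfl (fun j _ => this j)]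
      exact prod_ite_eq_ite kr mr
    have h2' : (∏ j ∈ ({i}ᶜ : Finset (Fin N)),
        Function.update (fun j => (1 : Matrix (Fin (d j)) (Fin (d j)) ℝ)) i A j
          ((combineIdx i a kr) j) ((idxEquiv d i (b, mr)) j))
        = if kr = mr then 1 else 0 := by
      rw [Finset.prod_subtype ({i}ᶜ : Finset (Fin N)) (p := (· ≠ i))
        (fun x => by simp)
        (fun j => Function.update (fun j => (1 : Matrix (Fin (d j)) (Fin (d j)) ℝ)) i A j
          ((combineIdx i a kr) j) ((idxEquiv d i (b, mr)) j))]
      exact h2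
    rw [h1, h2']
    by_cases h : kr = mr
    · rw [if_pos h, if_pos h, mul_one]
    · rw [if_neg h, if_neg h, mul_zero]
  calc (∑ mr, (∏ j, Function.update (fun j => (1 : Matrix (Fin (d j)) (Fin (d j)) ℝ)) i A j
          ((combineIdx i a kr) j) ((idxEquiv d i (b, mr)) j)) * C (idxEquiv d i (b, mr)))
      = ∑ mr, (if kr = mr then A a b else 0) * C (idxEquiv d i (b, mr)) := by
        exact Finset.sum_congr rfl fun mr _ => by rw [key mr]
    _ = A a b * C (combineIdx i b kr) := by
        simp only [ite_mul, zero_mul, Finset.sum_ite_eq, Finset.mem_univ, if_true]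
        rfl
  
/-- reindexing a tensor inner product along mode `i` -/
lemma tIP_eq_sum_fiber (i : Fin N) (C D : (∀ i, Fin (d i)) → ℝ) :
    tIP C D = ∑ a : Fin (d i), ∑ kr : ∀ j : {j : Fin N // j ≠ i}, Fin (d j.1),
      C (combineIdx i a kr) * D (combineIdx i a kr) := by
  rw [tIP, ← Equiv.sum_comp (idxEquiv d i), Fintype.sum_prod_type]
  rfl

end TensorAux2

section TensorAux3

variable {N : ℕ} {d : Fin N → ℕ}

lemma tIP_zero_right (C : (∀ i, Fin (d i)) → ℝ) : tIP C 0 = 0 := by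
  simp [tIP]

lemma tIP_add_of_orth (v w : (∀ i, Fin (d i)) → ℝ) (h : tIP v w = 0) :
    tIP (v + w) (v + w) = tIP v v + tIP w w := by
  rw [tIP_add_left, tIP_add_right, tIP_add_right, h, tIP_comm w v, h]
  ring

/-- the key telescoping estimate over a finite set of modes -/
lemma telescope_bound (P : ∀ i, Matrix (Fin (d i)) (Fin (d i)) ℝ)
    (hsym : ∀ i, (P i)ᵀ = P i) (hidem : ∀ i, P i * P i = P i)
    (Y : (∀ i, Fin (d i)) → ℝ) (s : Finset (Fin N)) :
    tIP (Y - tApp (fun j => if j ∈ s then P j else 1) Y)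
        (Y - tApp (fun j => if j ∈ s then P j else 1) Y)
      ≤ ∑ i ∈ s,
        tIP (Y - tApp (Function.update (fun j => (1 : Matrix (Fin (d j)) (Fin (d j)) ℝ)) i (P i)) Y)
            (Y - tApp (Function.update (fun j => (1 : Matrix (Fin (d j)) (Fin (d j)) ℝ)) i (P i)) Y) := by
  classical
  induction s using Finset.induction_on with
  | empty =>
      simp only [Finset.notMem_empty, if_false, tApp_one, sub_self, Finset.sum_empty]
      simp [tIP]
  | @insert i s his ih =>
      set F : ∀ j, Matrix (Fin (d j)) (Fin (d j)) ℝ := fun j => if j ∈ s then P j else 1 with hF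
      have hFsym : ∀ j, (F j)ᵀ = F j := by
        intro j; by_cases h : j ∈ s <;> simp [hF, h, hsym]
      have hFidem : ∀ j, F j * F j = F j := by
        intro j; by_cases h : j ∈ s <;> simp [hF, h, hidem]
      set G : ∀ j, Matrix (Fin (d j)) (Fin (d j)) ℝ :=
        Function.update (fun j => (1 : Matrix (Fin (d j)) (Fin (d j)) ℝ)) i (P i) with hG
      have hGi : G i = P i := Function.update_self _ _ _
      have hGne : ∀ j, j ≠ i → G j = 1 := fun j h => Function.update_of_ne h _ _
      have hFG : (fun j => F j * G j) = fun j => if j ∈ insert i s then P j else 1 := by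
        funext j
        by_cases h : j = i
        · subst h
          rw [hGi]
          simp [hF, his, Finset.mem_insert]
        · rw [hGne j h, mul_one]
          simp [hF, Finset.mem_insert, h]
      set u : (∀ i, Fin (d i)) → ℝ := Y - tApp G Y with hu
      set v : (∀ i, Fin (d i)) → ℝ := Y - tApp F Y with hv
      have hdecomp : Y - tApp (fun j => if j ∈ insert i s then P j else 1) Y
          = v + tApp F u := by
        rw [← hFG, hu, hv, tApp_sub, tApp_tApp]
        funext k
        simp only [Pi.add_apply, Pi.sub_apply]
        ring
      have horth : tIP v (tApp F u) = 0 := by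
        rw [tIP_comm, tIP_tApp]
        have : tApp (fun i => (F i)ᵀ) v = 0 := by
          have h1 : (fun i => (F i)ᵀ) = F := funext fun j => hFsym j
          rw [h1, hv, tApp_sub, tApp_tApp]
          have h2 : (fun i => F i * F i) = F := funext fun j => hFidem j
          rw [h2, sub_self]
        rw [this, tIP_zero_right]
      rw [hdecomp, tIP_add_of_orth v _ horth, Finset.sum_insert his]
      have hcontr : tIP (tApp F u) (tApp F u) ≤ tIP u u :=
        tApp_contraction F hFsym hFidem u
      have := ih
      linarith

end TensorAux3

section MatrixAux

lemma trace_mul_transpose_self {n : Type*} [Fintype n] {m : Type*} [Fintype m]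
    (M : Matrix n m ℝ) :
    Matrix.trace (M * Mᵀ) = ∑ a, ∑ k, M a k * M a k := by
  simp [Matrix.trace, Matrix.mul_apply, Matrix.diag]

lemma sum_castLE {n r : ℕ} (h : r ≤ n) (f : Fin n → ℝ) :
    ∑ j : Fin r, f (Fin.castLE h j) = ∑ k : Fin n, if (k : ℕ) < r then f k else 0 := by
  rw [← Finset.sum_filter]
  refine (Finset.sum_bij' (i := fun (k : Fin n) (hk : k ∈ Finset.univ.filter
      (fun k : Fin n => (k : ℕ) < r)) => (⟨(k : ℕ), (Finset.mem_filter.mp hk).2⟩ : Fin r))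
    (j := fun (j : Fin r) _ => Fin.castLE h j) ?_ ?_ ?_ ?_ ?_).symm
  · intro a ha; exact Finset.mem_univ _
  · intro a ha
    simp [Fin.castLE]
  · intro a ha
    rfl
  · intro a ha
    rfl
  · intro a ha
    rfl

/-- `V Vᵀ` equals `W diag(t) Wᵀ` for `V` the leading columns of `W` -/
lemma VVT_eq_WtWT {n r : ℕ} (h : r ≤ n) (Wm : Matrix (Fin n) (Fin n) ℝ) :
    (Wm.submatrix id (Fin.castLE h)) * (Wm.submatrix id (Fin.castLE h))ᵀ
      = Wm * Matrix.diagonal (fun k : Fin n => if (k : ℕ) < r then (1:ℝ) else 0) * Wmᵀ := by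
  ext a b
  rw [Matrix.mul_apply]
  rw [Matrix.mul_apply]
  have : ∀ k : Fin n, (Wm * Matrix.diagonal
      (fun k : Fin n => if (k : ℕ) < r then (1:ℝ) else 0)) a k * Wmᵀ k b
      = if (k : ℕ) < r then Wm a k * Wm b k else 0 := by
    intro k
    rw [Matrix.mul_diagonal, Matrix.transpose_apply]
    by_cases hk : (k : ℕ) < r <;> simp [hk] <;> ring
  rw [Finset.sum_congr rfl fun k _ => this k, ← sum_castLE h (fun k => Wm a k * Wm b k)]
  refine Finset.sum_congr rfl fun j _ => ?_
  simp [Matrix.submatrix, Matrix.transpose_apply]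

/-- trace formula for the tail projection -/
lemma trace_tail {n r : ℕ} (h : r ≤ n) (Wm : Matrix (Fin n) (Fin n) ℝ)
    (hW : Wmᵀ * Wm = 1) (nu : Fin n → ℝ) :
    (Matrix.trace
      ((1 - (Wm.submatrix id (Fin.castLE h)) * (Wm.submatrix id (Fin.castLE h))ᵀ) *
        (Wm * Matrix.diagonal nu * Wmᵀ) *
        (1 - (Wm.submatrix id (Fin.castLE h)) * (Wm.submatrix id (Fin.castLE h))ᵀ)ᵀ))
      = ∑ k ∈ Finset.univ.filter (fun k : Fin n => r ≤ (k : ℕ)), nu k := by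
  have hWWT : Wm * Wmᵀ = 1 := mul_eq_one_comm.mp hW
  set t : Fin n → ℝ := fun k => if (k : ℕ) < r then (1:ℝ) else 0 with ht
  set s : Fin n → ℝ := fun k => 1 - t k with hs
  have hB : (1 - (Wm.submatrix id (Fin.castLE h)) * (Wm.submatrix id (Fin.castLE h))ᵀ)
      = Wm * Matrix.diagonal s * Wmᵀ := by
    rw [VVT_eq_WtWT h Wm]
    have : Matrix.diagonal s = 1 - Matrix.diagonal t := by
      rw [← Matrix.diagonal_one, ← Matrix.diagonal_sub]
    rw [this, Matrix.mul_sub, Matrix.sub_mul, Matrix.mul_one, hWWT]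
  rw [hB]
  have hBT : (Wm * Matrix.diagonal s * Wmᵀ)ᵀ = Wm * Matrix.diagonal s * Wmᵀ := by
    rw [Matrix.transpose_mul, Matrix.transpose_mul, Matrix.transpose_transpose,
      Matrix.diagonal_transpose, Matrix.mul_assoc]
  rw [hBT]
  have key : Wm * Matrix.diagonal s * Wmᵀ * (Wm * Matrix.diagonal nu * Wmᵀ) *
      (Wm * Matrix.diagonal s * Wmᵀ)
      = Wm * (Matrix.diagonal s * Matrix.diagonal nu * Matrix.diagonal s) * Wmᵀ := by
    have h1 : ∀ (A B : Matrix (Fin n) (Fin n) ℝ),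
        Wm * A * Wmᵀ * (Wm * B * Wmᵀ) = Wm * (A * B) * Wmᵀ := by
      intro A B
      have hrw : Wm * A * Wmᵀ * (Wm * B * Wmᵀ) = Wm * (A * (Wmᵀ * Wm) * B) * Wmᵀ := by
        noncomm_ring
      rw [hrw, hW, Matrix.mul_one, Matrix.mul_assoc]
    rw [h1, h1]
  rw [key]
  rw [Matrix.trace_mul_comm, ← Matrix.mul_assoc, hW, Matrix.one_mul]
  rw [Matrix.diagonal_mul_diagonal, Matrix.diagonal_mul_diagonal, Matrix.trace_diagonal]
  rw [Finset.sum_filter]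
  refine Finset.sum_congr rfl fun k _ => ?_
  by_cases hk : (k : ℕ) < r
  · simp [hs, ht, hk, Nat.not_le.mpr hk]
  · simp [hs, ht, hk, Nat.le_of_not_lt hk]

end MatrixAux

section ModeEnergy

variable {N : ℕ} {d : Fin N → ℕ}

lemma mode_energy (i : Fin N)
    (P : Matrix (Fin (d i)) (Fin (d i)) ℝ) (Y : (∀ i, Fin (d i)) → ℝ)
    (Zi : Matrix (Fin (d i)) (∀ j : {j : Fin N // j ≠ i}, Fin (d j.1)) ℝ)
    (hZY : ∀ a kr, Zi a kr = Y (combineIdx i a kr)) :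
    tIP (Y - tApp (Function.update (fun j => (1 : Matrix (Fin (d j)) (Fin (d j)) ℝ)) i P) Y)
        (Y - tApp (Function.update (fun j => (1 : Matrix (Fin (d j)) (Fin (d j)) ℝ)) i P) Y)
      = Matrix.trace (((1 - P) * Zi) * ((1 - P) * Zi)ᵀ) := by
  rw [tIP_eq_sum_fiber i, trace_mul_transpose_self]
  refine Finset.sum_congr rfl fun a _ => Finset.sum_congr rfl fun kr _ => ?_
  have hv : (Y - tApp (Function.update
        (fun j => (1 : Matrix (Fin (d j)) (Fin (d j)) ℝ)) i P) Y) (combineIdx i a kr)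
      = ∑ b, ((1 : Matrix (Fin (d i)) (Fin (d i)) ℝ) a b - P a b) * Zi b kr := by
    rw [Pi.sub_apply, tApp_update_apply]
    simp only [sub_mul, Finset.sum_sub_distrib, Matrix.one_apply, ite_mul, one_mul,
      Finset.sum_ite_eq, Finset.mem_univ, if_true]
    simp [hZY]
  simp only [Matrix.mul_apply, Matrix.sub_apply]
  rw [hv]

end ModeEnergy

section Bridge

lemma memL2_mul_integrable {α : Type*} [MeasurableSpace α] (μ : MeasureTheory.Measure α)
    {f g : α → ℝ} (hf : MeasureTheory.MemLp f 2 μ) (hg : MeasureTheory.MemLp g 2 μ) :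
    MeasureTheory.Integrable (fun ω => f ω * g ω) μ := by
  have h := hf.smul hg (p := 2) (q := 2) (r := 1)
    (hpqr := ⟨by simp [one_div, ENNReal.inv_two_add_inv_two]⟩)
  have heq : (g • f) = fun ω => f ω * g ω := by
    funext ω; simp [mul_comm]
  rw [heq] at h
  exact MeasureTheory.memLp_one_iff_integrable.mp h

variable {N : ℕ} {Ω : Fin N → Type} [∀ i, MeasurableSpace (Ω i)]

lemma integral_rep (μ : ∀ i, MeasureTheory.Measure (Ω i)) [∀ i, MeasureTheory.SigmaFinite (μ i)]
    {d : Fin N → ℕ} (ψ : ∀ i, Fin (d i) → Ω i → ℝ)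
    (hψ : ∀ i k, MeasureTheory.MemLp (ψ i k) 2 (μ i))
    (C D : (∀ i, Fin (d i)) → ℝ) :
    ∫ ω, (∑ k : ∀ i, Fin (d i), C k * ∏ i, ψ i (k i) (ω i)) *
          (∑ l : ∀ i, Fin (d i), D l * ∏ i, ψ i (l i) (ω i)) ∂(MeasureTheory.Measure.pi μ)
      = ∑ k : ∀ i, Fin (d i), ∑ l : ∀ i, Fin (d i),
          C k * D l * ∏ i, (∫ ωi, ψ i (k i) ωi * ψ i (l i) ωi ∂(μ i)) := by
  letI : ∀ i, MeasureTheory.MeasureSpace (Ω i) := fun i => ⟨μ i⟩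
  have hvol : MeasureTheory.Measure.pi μ = (MeasureTheory.volume : MeasureTheory.Measure (∀ i, Ω i)) :=
    (MeasureTheory.volume_pi).symm
  have hpt : ∀ ω : ∀ i, Ω i,
      (∑ k : ∀ i, Fin (d i), C k * ∏ i, ψ i (k i) (ω i)) *
        (∑ l : ∀ i, Fin (d i), D l * ∏ i, ψ i (l i) (ω i))
      = ∑ k : ∀ i, Fin (d i), ∑ l : ∀ i, Fin (d i),
          (C k * D l) * ∏ i, (ψ i (k i) (ω i) * ψ i (l i) (ω i)) := by
    intro ω
    rw [Finset.sum_mul_sum]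
    refine Finset.sum_congr rfl fun k _ => Finset.sum_congr rfl fun l _ => ?_
    rw [Finset.prod_mul_distrib]
    ring
  have hint : ∀ k l : ∀ i, Fin (d i), MeasureTheory.Integrable
      (fun ω : ∀ i, Ω i => ∏ i, (ψ i (k i) (ω i) * ψ i (l i) (ω i)))
      (MeasureTheory.Measure.pi μ) := by
    intro k l
    rw [hvol]
    exact MeasureTheory.Integrable.fintype_prod_dep
      (f := fun i ωi => ψ i (k i) ωi * ψ i (l i) ωi)
      (fun i => memL2_mul_integrable (μ i) (hψ i (k i)) (hψ i (l i)))
  rw [MeasureTheory.integral_congr_ae (Filter.Eventually.of_forall hpt)]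
  rw [MeasureTheory.integral_finset_sum _ (fun k _ =>
    MeasureTheory.integrable_finset_sum _ (fun l _ => ((hint k l).const_mul _)))]
  refine Finset.sum_congr rfl fun k _ => ?_
  rw [MeasureTheory.integral_finset_sum _ (fun l _ => ((hint k l).const_mul _))]
  refine Finset.sum_congr rfl fun l _ => ?_
  rw [MeasureTheory.integral_const_mul]
  congr 1
  rw [hvol]
  exact MeasureTheory.integral_fintype_prod_eq_prod
    (fun i ωi => ψ i (k i) ωi * ψ i (l i) ωi)

end Bridge

section MoreAux

variable {N : ℕ} {d : Fin N → ℕ}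

lemma prod_combineIdx (i : Fin N) (f : ∀ j, Fin (d j) → Fin (d j) → ℝ)
    (a b : Fin (d i)) (kr mr : ∀ j : {j : Fin N // j ≠ i}, Fin (d j.1)) :
    (∏ j, f j (combineIdx i a kr j) (combineIdx i b mr j))
      = f i a b * ∏ j : {j : Fin N // j ≠ i}, f j.1 (kr j) (mr j) := by
  rw [Fintype.prod_eq_mul_prod_compl i]
  congr 1
  · rw [combineIdx_same, combineIdx_same]
  · rw [Finset.prod_subtype ({i}ᶜ : Finset (Fin N)) (p := (· ≠ i)) (fun x => by simp)
      (fun j => f j (combineIdx i a kr j) (combineIdx i b mr j))]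
    exact Finset.prod_congr rfl fun j _ => by rw [combineIdx_ne i j.2, combineIdx_ne i j.2]

lemma tIP_tApp_gram (Lf : ∀ i, Matrix (Fin (d i)) (Fin (d i)) ℝ)
    (C D : (∀ i, Fin (d i)) → ℝ) :
    tIP (tApp (fun i => (Lf i)ᵀ) C) (tApp (fun i => (Lf i)ᵀ) D)
      = ∑ k : ∀ i, Fin (d i), ∑ l : ∀ i, Fin (d i),
          C k * D l * ∏ i, (Lf i * (Lf i)ᵀ) (k i) (l i) := by
  rw [tIP_tApp, tApp_tApp]
  have h1 : (fun i => ((Lf i)ᵀ)ᵀ * (Lf i)ᵀ) = fun i => (Lf i * (Lf i)ᵀ)ᵀ := by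
    funext i
    rw [Matrix.transpose_mul, Matrix.transpose_transpose]
  have hsymM : ∀ (x : Fin N) (p q : Fin (d x)),
      (Lf x * (Lf x)ᵀ) p q = (Lf x * (Lf x)ᵀ) q p := by
    intro x p q
    rw [Matrix.mul_apply, Matrix.mul_apply]
    simp only [Matrix.transpose_apply]
    exact Finset.sum_congr rfl fun j _ => mul_comm _ _
  rw [h1, tIP]
  simp only [tApp]
  refine Finset.sum_congr rfl fun k _ => ?_
  rw [Finset.mul_sum]
  refine Finset.sum_congr rfl fun l _ => ?_
  simp only [Matrix.transpose_apply]
  rw [Finset.prod_congr rfl fun x _ => hsymM x (l x) (k x)]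
  ring

lemma VtV {n r : ℕ} (h : r ≤ n) (Wm : Matrix (Fin n) (Fin n) ℝ)
    (hW : Wmᵀ * Wm = 1) :
    (Wm.submatrix id (Fin.castLE h))ᵀ * (Wm.submatrix id (Fin.castLE h)) = 1 := by
  ext a b
  have h2 : (Wmᵀ * Wm) (Fin.castLE h a) (Fin.castLE h b)
      = (1 : Matrix (Fin n) (Fin n) ℝ) (Fin.castLE h a) (Fin.castLE h b) := by rw [hW]
  rw [Matrix.mul_apply] at h2
  simp only [Matrix.transpose_apply] at h2
  rw [Matrix.mul_apply]
  simp only [Matrix.transpose_apply, Matrix.submatrix_apply, id]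
  rw [h2, Matrix.one_apply, Matrix.one_apply]
  by_cases hab : a = b
  · simp [hab]
  · rw [if_neg hab, if_neg (fun hc => hab (by exact Fin.castLE_injective h hc))]

end MoreAux

/-- (Projection error estimate, Eqn. (2.4)) Let `x` have coefficient tensor
`X`, and for each mode `i` let `V̂ᵢ` be the `d̂ᵢ`-dimensional POD subspace
spanned by the functions `V_{i,d̂ᵢ}ᵀ Lᵢ⁻¹ Ψᵢ` built from the `d̂ᵢ` leading
left singular vectors of
`Zᵢ = Lᵢᵀ (pt^{i-1} X)⁽¹⁾ (L_{i-1} ⊗ ⋯ ⊗ L_1 ⊗ L_N ⊗ ⋯ ⊗ L_{i+1})`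
(encoded via an orthogonal matrix `W i` diagonalizing `Zᵢ Zᵢᵀ` with
decreasingly sorted eigenvalues `ν i`; the singular values satisfy
`(σ_k^{(i)})² = ν i k`).  If `x̂` is the `‖·‖_V`-orthogonal projection of `x`
onto `V̂_1 · V̂_2 ⋯ V̂_N`, then
`‖x - x̂‖_V² ≤ Σᵢ Σ_{k = d̂ᵢ+1}^{dᵢ} (σ_k^{(i)})²`. -/
theorem pod_projection_error_estimate
    {N : ℕ} {Ω : Fin N → Type} [∀ i, MeasurableSpace (Ω i)]
    (μ : ∀ i, Measure (Ω i)) [∀ i, SigmaFinite (μ i)]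
    {d : Fin N → ℕ} (ψ : ∀ i, Fin (d i) → Ω i → ℝ)
    (hψ : ∀ i k, MemLp (ψ i k) 2 (μ i))
    (hψli : ∀ i, LinearIndependent ℝ (ψ i))
    (L : ∀ i, Matrix (Fin (d i)) (Fin (d i)) ℝ)
    (hLunit : ∀ i, IsUnit (L i).det)
    (hL : ∀ i, (Matrix.of fun k l => ∫ ω, ψ i k ω * ψ i l ω ∂(μ i))
            = L i * (L i)ᵀ)
    (X : (∀ i, Fin (d i)) → ℝ)
    (x : (∀ i, Ω i) → ℝ)
    (hx : ∀ ω, x ω = ∑ k : ∀ i, Fin (d i), X k * ∏ i, ψ i (k i) (ω i))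
    (dr : Fin N → ℕ) (hdr : ∀ i, dr i ≤ d i)
    -- the matrices `Zᵢ`
    (Z : ∀ i, Matrix (Fin (d i)) (∀ j : {j : Fin N // j ≠ i}, Fin (d j.1)) ℝ)
    (hZ : ∀ i, Z i = (L i)ᵀ *
        Matrix.of (fun (k₁ : Fin (d i))
            (kr : ∀ j : {j : Fin N // j ≠ i}, Fin (d j.1)) =>
          X (combineIdx i k₁ kr)) *
        Matrix.of (fun k l : ∀ j : {j : Fin N // j ≠ i}, Fin (d j.1) =>
          ∏ j, L j.1 (k j) (l j)))
    -- sorted spectral decompositions of `Zᵢ Zᵢᵀ`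
    (W : ∀ i, Matrix (Fin (d i)) (Fin (d i)) ℝ) (ν : ∀ i, Fin (d i) → ℝ)
    (hW : ∀ i, (W i)ᵀ * W i = 1)
    (hν : ∀ i, ∀ a b : Fin (d i), a ≤ b → ν i b ≤ ν i a)
    (hspec : ∀ i, Z i * (Z i)ᵀ = W i * Matrix.diagonal (ν i) * (W i)ᵀ)
    -- the matrices `V_{i,d̂ᵢ}` of leading left singular vectors
    (V : ∀ i, Matrix (Fin (d i)) (Fin (dr i)) ℝ)
    (hV : ∀ i, V i = (W i).submatrix id (Fin.castLE (hdr i)))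
    -- the reduced basis functions `(φ̂ᵢ¹,…,φ̂ᵢ^{d̂ᵢ})ᵀ = V_{i,d̂ᵢ}ᵀ Lᵢ⁻¹ Ψᵢ`
    (φr : ∀ i, Fin (dr i) → Ω i → ℝ)
    (hφr : ∀ i j ω, φr i j ω = ∑ k, ((V i)ᵀ * (L i)⁻¹) j k * ψ i k ω)
    -- `x̂`: the `‖·‖_V`-orthogonal projection of `x` onto `V̂_1 · V̂_2 ⋯ V̂_N`
    (xh : (∀ i, Ω i) → ℝ)
    (hxhmem : xh ∈ Submodule.span ℝ
        {f : (∀ i, Ω i) → ℝ | ∃ k : ∀ i, Fin (dr i),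
          f = fun ω => ∏ i, φr i (k i) (ω i)})
    (hxhorth : ∀ y ∈ Submodule.span ℝ
        {f : (∀ i, Ω i) → ℝ | ∃ k : ∀ i, Fin (dr i),
          f = fun ω => ∏ i, φr i (k i) (ω i)},
        ∫ ω, (x ω - xh ω) * y ω ∂(Measure.pi μ) = 0) :
    ∫ ω, (x ω - xh ω) ^ 2 ∂(Measure.pi μ)
      ≤ ∑ i, ∑ k ∈ Finset.univ.filter (fun k : Fin (d i) => dr i ≤ (k : ℕ)),
          ν i k := by
  classical
  set S : Set ((∀ i, Ω i) → ℝ) := {f : (∀ i, Ω i) → ℝ | ∃ k : ∀ i, Fin (dr i),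
          f = fun ω => ∏ i, φr i (k i) (ω i)} with hS
  set Pm : ∀ i, Matrix (Fin (d i)) (Fin (d i)) ℝ := fun i => V i * (V i)ᵀ with hPm
  have hVtV : ∀ i, (V i)ᵀ * V i = 1 := by
    intro i; rw [hV i]; exact VtV (hdr i) (W i) (hW i)
  have hPsym : ∀ i, (Pm i)ᵀ = Pm i := by
    intro i
    show (V i * (V i)ᵀ)ᵀ = V i * (V i)ᵀ
    rw [Matrix.transpose_mul, Matrix.transpose_transpose]
  have hPidem : ∀ i, Pm i * Pm i = Pm i := by
    intro i
    show V i * (V i)ᵀ * (V i * (V i)ᵀ) = V i * (V i)ᵀ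
    rw [Matrix.mul_assoc, ← Matrix.mul_assoc (V i)ᵀ, hVtV i, Matrix.one_mul]
  set Y : (∀ i, Fin (d i)) → ℝ := tApp (fun i => (L i)ᵀ) X with hYdef
  -- entries of Z are fibers of Y
  have hZY : ∀ i (a : Fin (d i)) (kr : ∀ j : {j : Fin N // j ≠ i}, Fin (d j.1)),
      Z i a kr = Y (combineIdx i a kr) := by
    intro i a kr
    have hnf : Y (combineIdx i a kr)
        = ∑ b : Fin (d i), ∑ mr : ∀ j : {j : Fin N // j ≠ i}, Fin (d j.1),
            (L i b a * ∏ j : {j : Fin N // j ≠ i}, L j.1 (mr j) (kr j))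
              * X (combineIdx i b mr) := by
      show (∑ m : ∀ j, Fin (d j),
          (∏ j, (L j)ᵀ (combineIdx i a kr j) (m j)) * X m) = _
      rw [← Equiv.sum_comp (idxEquiv d i), Fintype.sum_prod_type]
      refine Finset.sum_congr rfl fun b _ => Finset.sum_congr rfl fun mr _ => ?_
      rw [show (idxEquiv d i) (b, mr) = combineIdx i b mr from rfl]
      congr 1
      rw [prod_combineIdx i (fun j p q => (L j)ᵀ p q) a b kr mr]
      simp only [Matrix.transpose_apply]
    rw [hnf, hZ i]
    simp only [Matrix.mul_apply, Matrix.of_apply, Matrix.transpose_apply]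
    rw [Finset.sum_comm]
    refine Finset.sum_congr rfl fun mr _ => ?_
    rw [Finset.sum_mul]
    exact Finset.sum_congr rfl fun b _ => by ring
  -- per-mode energies
  have hmode : ∀ i, tIP
      (Y - tApp (Function.update (fun j => (1 : Matrix (Fin (d j)) (Fin (d j)) ℝ)) i (Pm i)) Y)
      (Y - tApp (Function.update (fun j => (1 : Matrix (Fin (d j)) (Fin (d j)) ℝ)) i (Pm i)) Y)
      = ∑ k ∈ Finset.univ.filter (fun k : Fin (d i) => dr i ≤ (k : ℕ)), ν i k := by
    intro i
    rw [mode_energy i (Pm i) Y (Z i) (hZY i)]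
    have h1 : ((1 - Pm i) * Z i) * ((1 - Pm i) * Z i)ᵀ
        = (1 - Pm i) * (Z i * (Z i)ᵀ) * (1 - Pm i)ᵀ := by
      rw [Matrix.transpose_mul, ← Matrix.mul_assoc,
        Matrix.mul_assoc (1 - Pm i) (Z i) (Z i)ᵀ]
    rw [h1, hspec i]
    have h2 : Pm i = (W i).submatrix id (Fin.castLE (hdr i))
        * ((W i).submatrix id (Fin.castLE (hdr i)))ᵀ := by
      show V i * (V i)ᵀ = _
      rw [hV i]
    rw [h2]
    exact trace_tail (hdr i) (W i) (hW i) (ν i)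
  -- gram bridging
  have hgram : ∀ C D : (∀ i, Fin (d i)) → ℝ,
      ∫ ω, (∑ k : ∀ i, Fin (d i), C k * ∏ i, ψ i (k i) (ω i)) *
            (∑ l : ∀ i, Fin (d i), D l * ∏ i, ψ i (l i) (ω i)) ∂(Measure.pi μ)
        = tIP (tApp (fun i => (L i)ᵀ) C) (tApp (fun i => (L i)ᵀ) D) := by
    intro C D
    rw [integral_rep μ ψ hψ C D, tIP_tApp_gram L C D]
    refine Finset.sum_congr rfl fun k _ => Finset.sum_congr rfl fun l _ => ?_
    congr 1
    refine Finset.prod_congr rfl fun i _ => ?_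
    rw [← hL i]
    rfl
  -- expansion of products of the reduced basis functions
  have hprodφ : ∀ (j : ∀ i, Fin (dr i)) (ω : ∀ i, Ω i),
      (∏ i, φr i (j i) (ω i))
        = ∑ k : ∀ i, Fin (d i),
            (∏ i, ((V i)ᵀ * (L i)⁻¹) (j i) (k i)) * ∏ i, ψ i (k i) (ω i) := by
    intro j ω
    calc (∏ i, φr i (j i) (ω i))
        = ∏ i, ∑ kk, ((V i)ᵀ * (L i)⁻¹) (j i) kk * ψ i kk (ω i) :=
          Finset.prod_congr rfl fun i _ => hφr i (j i) (ω i)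
      _ = ∑ m : ∀ i, Fin (d i),
            ∏ i, (((V i)ᵀ * (L i)⁻¹) (j i) (m i) * ψ i (m i) (ω i)) :=
          Fintype.prod_sum _
      _ = ∑ m : ∀ i, Fin (d i),
            (∏ i, ((V i)ᵀ * (L i)⁻¹) (j i) (m i)) * ∏ i, ψ i (m i) (ω i) :=
          Finset.sum_congr rfl fun m _ => Finset.prod_mul_distrib
  -- representation of elements of the span
  have hrep : ∀ f ∈ Submodule.span ℝ S, ∃ Cf : (∀ i, Fin (d i)) → ℝ,
      ∀ ω, f ω = ∑ k : ∀ i, Fin (d i), Cf k * ∏ i, ψ i (k i) (ω i) := by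
    intro f hf
    induction hf using Submodule.span_induction with
    | mem g hg =>
        obtain ⟨j, rfl⟩ := hg
        refine ⟨fun m => ∏ i, ((V i)ᵀ * (L i)⁻¹) (j i) (m i), fun ω => hprodφ j ω⟩
    | zero => exact ⟨0, fun ω => by simp⟩
    | add g h hg hh ihg ihh =>
        obtain ⟨Cg, hCg⟩ := ihg
        obtain ⟨Ch, hCh⟩ := ihh
        refine ⟨Cg + Ch, fun ω => ?_⟩
        rw [Pi.add_apply, hCg ω, hCh ω, ← Finset.sum_add_distrib]
        exact Finset.sum_congr rfl fun k _ => by simp [add_mul]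
    | smul a g hg ihg =>
        obtain ⟨Cg, hCg⟩ := ihg
        refine ⟨a • Cg, fun ω => ?_⟩
        rw [Pi.smul_apply, hCg ω, smul_eq_mul, Finset.mul_sum]
        exact Finset.sum_congr rfl fun k _ => by simp [mul_assoc]
  -- the comparison element y
  set c : (∀ i, Fin (dr i)) → ℝ :=
    fun j => ∑ m : ∀ i, Fin (d i), (∏ i, ((V i)ᵀ * (L i)ᵀ) (j i) (m i)) * X m with hc
  set y : (∀ i, Ω i) → ℝ :=
    fun ω => ∑ j : ∀ i, Fin (dr i), c j * ∏ i, φr i (j i) (ω i) with hydef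
  have hymem : y ∈ Submodule.span ℝ S := by
    have hsum : y = ∑ j : ∀ i, Fin (dr i),
        c j • (fun ω : ∀ i, Ω i => ∏ i, φr i (j i) (ω i)) := by
      funext ω
      rw [hydef]
      simp [Finset.sum_apply]
    rw [hsum]
    exact Submodule.sum_mem _ fun j _ =>
      Submodule.smul_mem _ _ (Submodule.subset_span ⟨j, rfl⟩)
  set Af : ∀ i, Matrix (Fin (d i)) (Fin (d i)) ℝ :=
    fun i => ((V i)ᵀ * (L i)⁻¹)ᵀ * ((V i)ᵀ * (L i)ᵀ) with hAf
  set Cy : (∀ i, Fin (d i)) → ℝ := tApp Af X with hCydef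
  have hcoef : ∀ k : ∀ i, Fin (d i),
      (∑ j : ∀ i, Fin (dr i), c j * ∏ i, ((V i)ᵀ * (L i)⁻¹) (j i) (k i)) = Cy k := by
    intro k
    calc ∑ j : ∀ i, Fin (dr i), c j * ∏ i, ((V i)ᵀ * (L i)⁻¹) (j i) (k i)
        = ∑ j : ∀ i, Fin (dr i), ∑ m : ∀ i, Fin (d i),
            (∏ i, (((V i)ᵀ * (L i)⁻¹) (j i) (k i) * ((V i)ᵀ * (L i)ᵀ) (j i) (m i))) * X m := by
          refine Finset.sum_congr rfl fun j _ => ?_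
          rw [hc]
          dsimp only
          rw [Finset.sum_mul]
          refine Finset.sum_congr rfl fun m _ => ?_
          rw [Finset.prod_mul_distrib]
          ring
      _ = ∑ m : ∀ i, Fin (d i), (∑ j : ∀ i, Fin (dr i),
            ∏ i, (((V i)ᵀ * (L i)⁻¹) (j i) (k i) * ((V i)ᵀ * (L i)ᵀ) (j i) (m i))) * X m := by
          rw [Finset.sum_comm]
          exact Finset.sum_congr rfl fun m _ => (Finset.sum_mul _ _ _).symm
      _ = ∑ m : ∀ i, Fin (d i),
            (∏ i, ∑ jj : Fin (dr i),
              (((V i)ᵀ * (L i)⁻¹) jj (k i) * ((V i)ᵀ * (L i)ᵀ) jj (m i))) * X m := by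
          refine Finset.sum_congr rfl fun m _ => ?_
          congr 1
          exact (Fintype.prod_sum fun i jj =>
            ((V i)ᵀ * (L i)⁻¹) jj (k i) * ((V i)ᵀ * (L i)ᵀ) jj (m i)).symm
      _ = ∑ m : ∀ i, Fin (d i), (∏ i, Af i (k i) (m i)) * X m := by
          refine Finset.sum_congr rfl fun m _ => ?_
          congr 1
      _ = Cy k := rfl
  have hyrep : ∀ ω, y ω = ∑ k : ∀ i, Fin (d i), Cy k * ∏ i, ψ i (k i) (ω i) := by
    intro ω
    calc y ω
        = ∑ j : ∀ i, Fin (dr i), c j * ∑ k : ∀ i, Fin (d i),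
            (∏ i, ((V i)ᵀ * (L i)⁻¹) (j i) (k i)) * ∏ i, ψ i (k i) (ω i) := by
          rw [hydef]
          exact Finset.sum_congr rfl fun j _ => by rw [hprodφ j ω]
      _ = ∑ j : ∀ i, Fin (dr i), ∑ k : ∀ i, Fin (d i),
            (c j * ∏ i, ((V i)ᵀ * (L i)⁻¹) (j i) (k i)) * ∏ i, ψ i (k i) (ω i) := by
          refine Finset.sum_congr rfl fun j _ => ?_
          rw [Finset.mul_sum]
          exact Finset.sum_congr rfl fun k _ => by ring
      _ = ∑ k : ∀ i, Fin (d i), (∑ j : ∀ i, Fin (dr i),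
            c j * ∏ i, ((V i)ᵀ * (L i)⁻¹) (j i) (k i)) * ∏ i, ψ i (k i) (ω i) := by
          rw [Finset.sum_comm]
          exact Finset.sum_congr rfl fun k _ => (Finset.sum_mul _ _ _).symm
      _ = ∑ k : ∀ i, Fin (d i), Cy k * ∏ i, ψ i (k i) (ω i) := by
          exact Finset.sum_congr rfl fun k _ => by rw [hcoef k]
  have hYy : tApp (fun i => (L i)ᵀ) Cy = tApp Pm Y := by
    rw [hCydef, tApp_tApp, hYdef, tApp_tApp]
    have hfam : (fun i => (L i)ᵀ * Af i) = (fun i => Pm i * (L i)ᵀ) := by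
      funext i
      show (L i)ᵀ * (((V i)ᵀ * (L i)⁻¹)ᵀ * ((V i)ᵀ * (L i)ᵀ)) = V i * (V i)ᵀ * (L i)ᵀ
      have hLiT : (L i)ᵀ * ((L i)⁻¹)ᵀ = 1 := by
        rw [← Matrix.transpose_mul, Matrix.nonsing_inv_mul (L i) (hLunit i),
          Matrix.transpose_one]
      calc (L i)ᵀ * (((V i)ᵀ * (L i)⁻¹)ᵀ * ((V i)ᵀ * (L i)ᵀ))
          = (L i)ᵀ * ((((L i)⁻¹)ᵀ * V i) * ((V i)ᵀ * (L i)ᵀ)) := by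
            rw [Matrix.transpose_mul, Matrix.transpose_transpose]
        _ = ((L i)ᵀ * ((L i)⁻¹)ᵀ) * (V i * ((V i)ᵀ * (L i)ᵀ)) := by
            simp only [Matrix.mul_assoc]
        _ = V i * (V i)ᵀ * (L i)ᵀ := by
            rw [hLiT, Matrix.one_mul, Matrix.mul_assoc]
    rw [hfam]
  -- coefficient tensor for xh
  obtain ⟨Cxh, hCxh⟩ := hrep xh hxhmem
  have hdiff : ∀ ω, x ω - xh ω
      = ∑ k : ∀ i, Fin (d i), (X - Cxh) k * ∏ i, ψ i (k i) (ω i) := by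
    intro ω
    rw [hx ω, hCxh ω, ← Finset.sum_sub_distrib]
    exact Finset.sum_congr rfl fun k _ => by simp [sub_mul]
  have hdiff2 : ∀ ω, xh ω - y ω
      = ∑ k : ∀ i, Fin (d i), (Cxh - Cy) k * ∏ i, ψ i (k i) (ω i) := by
    intro ω
    rw [hCxh ω, hyrep ω, ← Finset.sum_sub_distrib]
    exact Finset.sum_congr rfl fun k _ => by simp [sub_mul]
  have herr : ∫ ω, (x ω - xh ω) ^ 2 ∂(Measure.pi μ)
      = tIP (tApp (fun i => (L i)ᵀ) (X - Cxh)) (tApp (fun i => (L i)ᵀ) (X - Cxh)) := by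
    rw [← hgram (X - Cxh) (X - Cxh)]
    refine integral_congr_ae (Filter.Eventually.of_forall fun ω => ?_)
    dsimp only
    rw [pow_two, hdiff ω]
  have horthIP : tIP (tApp (fun i => (L i)ᵀ) (X - Cxh))
      (tApp (fun i => (L i)ᵀ) (Cxh - Cy)) = 0 := by
    rw [← hgram (X - Cxh) (Cxh - Cy)]
    rw [← hxhorth (xh - y) (Submodule.sub_mem _ hxhmem hymem)]
    refine integral_congr_ae (Filter.Eventually.of_forall fun ω => ?_)
    dsimp only [Pi.sub_apply]
    rw [hdiff ω, hdiff2 ω]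
    simp only [Pi.sub_apply]
  calc ∫ ω, (x ω - xh ω) ^ 2 ∂(Measure.pi μ)
      = tIP (tApp (fun i => (L i)ᵀ) (X - Cxh)) (tApp (fun i => (L i)ᵀ) (X - Cxh)) := herr
    _ ≤ tIP (tApp (fun i => (L i)ᵀ) (X - Cxh) + tApp (fun i => (L i)ᵀ) (Cxh - Cy))
          (tApp (fun i => (L i)ᵀ) (X - Cxh) + tApp (fun i => (L i)ᵀ) (Cxh - Cy)) :=
        tIP_le_of_orth _ _ horthIP
    _ = tIP (Y - tApp Pm Y) (Y - tApp Pm Y) := by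
        have hcomb : tApp (fun i => (L i)ᵀ) (X - Cxh) + tApp (fun i => (L i)ᵀ) (Cxh - Cy)
            = Y - tApp Pm Y := by
          rw [tApp_sub, tApp_sub, ← hYy, ← hYdef]
          funext k
          simp only [Pi.add_apply, Pi.sub_apply]
          ring
        rw [hcomb]
    _ ≤ ∑ i, tIP
          (Y - tApp (Function.update (fun j => (1 : Matrix (Fin (d j)) (Fin (d j)) ℝ)) i (Pm i)) Y)
          (Y - tApp (Function.update (fun j => (1 : Matrix (Fin (d j)) (Fin (d j)) ℝ)) i (Pm i)) Y) := by
        have h := telescope_bound Pm hPsym hPidem Y Finset.univ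
        have huniv : (fun j => if j ∈ (Finset.univ : Finset (Fin N)) then Pm j else 1) = Pm := by
          funext j; simp
        rw [huniv] at h
        exact h
    _ = ∑ i, ∑ k ∈ Finset.univ.filter (fun k : Fin (d i) => dr i ≤ (k : ℕ)), ν i k :=
        Finset.sum_congr rfl fun i _ => hmode i
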